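/- Let n, k be integers with 1 ≤ k and 2k ≤ n, and let x₁, ..., xₙ be real numbers with x₁ + ... + xₙ = 0. For S ⊆ {1,...,n}, write b_S = ∑_{i∈S} xᵢ. Then for every k-element subset A of {1,...,n}: ∑_{S ⊆ {1,...,n}, |S| = k, |S ∩ A| = 1} b_S = (C(n-k-1, k-1) - (k-1)·C(n-k-1, k-2)) · b_A. Moreover, the coefficient C(n-k-1, k-1) - (k-1)·C(n-k-1, k-2) is nonnegative if and only if n ≥ k². -/

import Mathlib

open Finset

/-- The number of (r+1)-subsets of `s` containing a fixed `i ∈ s`. -/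
lemma count_aux (s : Finset ℕ) (i : ℕ) (hi : i ∈ s) (r : ℕ) :
    ((s.powersetCard (r+1)).filter (fun T => i ∈ T)).card = (s.card - 1).choose r := by
  have h : ((s.powersetCard (r+1)).filter (fun T => i ∈ T)).card
      = ((s.erase i).powersetCard r).card := by
    apply Finset.card_nbij' (fun T => T.erase i) (fun T => insert i T)
    · intro T hT
      simp only [mem_coe, mem_filter, mem_powersetCard] at hT
      obtain ⟨⟨hTs, hTc⟩, hiT⟩ := hT
      simp only [mem_coe, mem_powersetCard]
      refine ⟨?_, ?_⟩
      · intro j hj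
        simp only [mem_erase] at hj ⊢
        exact ⟨hj.1, hTs hj.2⟩
      · rw [Finset.card_erase_of_mem hiT, hTc]; omega
    · intro T hT
      simp only [mem_coe, mem_powersetCard] at hT
      obtain ⟨hTs, hTc⟩ := hT
      have hiT : i ∉ T := fun h => (mem_erase.mp (hTs h)).1 rfl
      simp only [mem_coe, mem_filter, mem_powersetCard]
      refine ⟨⟨?_, ?_⟩, mem_insert_self i T⟩
      · intro j hj
        rcases mem_insert.mp hj with rfl | hj
        · exact hi
        · exact (erase_subset i s) (hTs hj)
      · rw [card_insert_of_notMem hiT, hTc]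
    · intro T hT
      simp only [mem_coe, mem_filter] at hT
      exact insert_erase hT.2
    · intro T hT
      simp only [mem_coe, mem_powersetCard] at hT
      have hiT : i ∉ T := fun h => (mem_erase.mp (hT.1 h)).1 rfl
      exact erase_insert hiT
  rw [h, Finset.card_powersetCard, Finset.card_erase_of_mem hi]

/-- Each element of `s` lies in `C(|s|-1, r)` of the (r+1)-subsets of `s`. -/
lemma sum_aux (s : Finset ℕ) (r : ℕ) (x : ℕ → ℝ) :
    ∑ T ∈ s.powersetCard (r+1), ∑ i ∈ T, x i
      = ((s.card - 1).choose r : ℝ) * ∑ i ∈ s, x i := by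
  have h1 : ∀ T ∈ s.powersetCard (r+1),
      ∑ i ∈ T, x i = ∑ i ∈ s, if i ∈ T then x i else 0 := by
    intro T hT
    rw [Finset.sum_ite_mem, Finset.inter_eq_right.mpr (mem_powersetCard.mp hT).1]
  rw [Finset.sum_congr rfl h1, Finset.sum_comm, Finset.mul_sum]
  apply Finset.sum_congr rfl
  intro i hi
  rw [← Finset.sum_filter, Finset.sum_const, count_aux s i hi r, nsmul_eq_mul]

/-- Nonnegativity of the coefficient. -/
lemma coeff_aux (n k : ℕ) (hk : 2 ≤ k) (hn : 2 * k ≤ n) :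
    (k - 1) * (n - k - 1).choose (k - 2) ≤ (n - k - 1).choose (k - 1) ↔ k ^ 2 ≤ n := by
  obtain ⟨k', rfl⟩ : ∃ k', k = k' + 2 := ⟨k - 2, by omega⟩
  set m := n - (k' + 2) - 1 with hm
  have hrm : k' ≤ m := by omega
  have hpos : 0 < m.choose k' := Nat.choose_pos hrm
  have key : m.choose (k'+1) * (k'+1) = m.choose k' * (m - k') :=
    Nat.choose_succ_right_eq m k'
  have h1 : k' + 2 - 1 = k' + 1 := by omega
  have h2 : k' + 2 - 2 = k' := by omega
  rw [h1, h2]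
  have e1 : (k'+1)^2 = k'*k' + 2*k' + 1 := by ring
  have e2 : (k'+2)^2 = k'*k' + 4*k' + 4 := by ring
  constructor
  · intro h
    have h3 : ((k'+1) * m.choose k') * (k'+1) ≤ m.choose (k'+1) * (k'+1) :=
      Nat.mul_le_mul_right _ h
    rw [key] at h3
    have h4 : (k'+1)^2 * m.choose k' ≤ (m - k') * m.choose k' := by
      calc (k'+1)^2 * m.choose k' = ((k'+1) * m.choose k') * (k'+1) := by ring
        _ ≤ m.choose k' * (m - k') := h3
        _ = (m - k') * m.choose k' := by ring
    have h5 : (k'+1)^2 ≤ m - k' := Nat.le_of_mul_le_mul_right h4 hpos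
    rw [e1] at h5
    rw [e2]
    set q := k' * k' with hq
    omega
  · intro h
    have h5 : (k'+1)^2 ≤ m - k' := by
      rw [e1]
      rw [e2] at h
      set q := k' * k' with hq
      omega
    have h4 : (k'+1)^2 * m.choose k' ≤ (m - k') * m.choose k' :=
      Nat.mul_le_mul_right _ h5
    have h3 : ((k'+1) * m.choose k') * (k'+1) ≤ m.choose (k'+1) * (k'+1) := by
      calc ((k'+1) * m.choose k') * (k'+1) = (k'+1)^2 * m.choose k' := by ring
        _ ≤ (m - k') * m.choose k' := h4
        _ = m.choose k' * (m - k') := by ring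
        _ = m.choose (k'+1) * (k'+1) := key.symm
    exact Nat.le_of_mul_le_mul_right h3 (by omega)

theorem sum_over_single_intersection (n k : ℕ) (hk : 1 ≤ k) (hn : 2 * k ≤ n)
    (x : ℕ → ℝ)
    (hsum : ∑ i ∈ Finset.Icc 1 n, x i = 0)
    (A : Finset ℕ) (hA : A ∈ (Finset.Icc 1 n).powersetCard k) :
    (∑ S ∈ ((Finset.Icc 1 n).powersetCard k).filter
          (fun S => (S ∩ A).card = 1), (∑ i ∈ S, x i) =
        (((n - k - 1).choose (k - 1) : ℝ) -
            ((k : ℝ) - 1) * ((n - k - 1).choose (k - 2) : ℝ)) * ∑ i ∈ A, x i) ∧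
      (0 ≤ ((n - k - 1).choose (k - 1) : ℝ) -
            ((k : ℝ) - 1) * ((n - k - 1).choose (k - 2) : ℝ) ↔ k ^ 2 ≤ n) := by
  obtain ⟨hAs, hAc⟩ := Finset.mem_powersetCard.mp hA
  set I := Finset.Icc 1 n with hI
  have hIcard : I.card = n := by rw [hI, Nat.card_Icc]; omega
  have hIA : (I \ A).card = n - k := by rw [Finset.card_sdiff_of_subset hAs, hIcard, hAc]
  have hsdiff : ∑ i ∈ I \ A, x i = - ∑ i ∈ A, x i := by
    rw [Finset.sum_sdiff_eq_sub hAs, hsum]; ring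
  rcases eq_or_lt_of_le hk with h1 | hk2
  · -- case k = 1
    obtain rfl : k = 1 := h1.symm
    have hfilt : ((I.powersetCard 1).filter (fun S => (S ∩ A).card = 1)) = {A} := by
      ext S
      simp only [Finset.mem_filter, Finset.mem_powersetCard, Finset.mem_singleton]
      constructor
      · rintro ⟨⟨hS, hS1⟩, hSA⟩
        have h1 : S ∩ A = S :=
          Finset.eq_of_subset_of_card_le Finset.inter_subset_left (by omega)
        have h2 : S ⊆ A := h1 ▸ Finset.inter_subset_right
        exact Finset.eq_of_subset_of_card_le h2 (by omega)
      · rintro rfl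
        exact ⟨⟨hAs, hAc⟩, by rw [Finset.inter_self, hAc]⟩
    constructor
    · rw [hfilt, Finset.sum_singleton]
      norm_num
    · norm_num
      omega
  · -- case 2 ≤ k
    have hk2 : 2 ≤ k := hk2
    -- the bijection between the family and A ×ˢ (k-1)-subsets of I \ A
    have hbij : ∑ p ∈ A ×ˢ ((I \ A).powersetCard (k-1)), (x p.1 + ∑ i ∈ p.2, x i)
        = ∑ S ∈ (I.powersetCard k).filter (fun S => (S ∩ A).card = 1),
            ∑ i ∈ S, x i := by
      apply Finset.sum_bij (fun p _ => insert p.1 p.2)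
      · rintro ⟨a, T⟩ hp
        simp only [Finset.mem_product, Finset.mem_powersetCard] at hp
        obtain ⟨haA, hTs, hTc⟩ := hp
        have hTA : ∀ j ∈ T, j ∉ A := fun j hj => (Finset.mem_sdiff.mp (hTs hj)).2
        have haT : a ∉ T := fun h => hTA a h haA
        simp only [Finset.mem_filter, Finset.mem_powersetCard]
        refine ⟨⟨?_, ?_⟩, ?_⟩
        · intro j hj
          rcases Finset.mem_insert.mp hj with rfl | hj
          · exact hAs haA
          · exact (Finset.sdiff_subset) (hTs hj)
        · rw [Finset.card_insert_of_notMem haT, hTc]; omega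
        · have : (insert a T) ∩ A = {a} := by
            ext j
            simp only [Finset.mem_inter, Finset.mem_insert, Finset.mem_singleton]
            constructor
            · rintro ⟨rfl | hj, hjA⟩
              · rfl
              · exact absurd hjA (hTA j hj)
            · rintro rfl
              exact ⟨Or.inl rfl, haA⟩
          rw [this, Finset.card_singleton]
      · rintro ⟨a, T⟩ hp ⟨a', T'⟩ hp' heq
        simp only [Finset.mem_product, Finset.mem_powersetCard] at hp hp'
        obtain ⟨haA, hTs, hTc⟩ := hp
        obtain ⟨haA', hTs', hTc'⟩ := hp'
        have hTA : ∀ j ∈ T, j ∉ A := fun j hj => (Finset.mem_sdiff.mp (hTs hj)).2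
        have hTA' : ∀ j ∈ T', j ∉ A := fun j hj => (Finset.mem_sdiff.mp (hTs' hj)).2
        simp only at heq
        have haa : a = a' := by
          have : a ∈ insert a' T' := heq ▸ Finset.mem_insert_self a T
          rcases Finset.mem_insert.mp this with h | h
          · exact h
          · exact absurd haA (hTA' a h)
        subst haa
        have haT : a ∉ T := fun h => hTA a h haA
        have haT' : a ∉ T' := fun h => hTA' a h haA
        have : T = T' := by
          rw [← Finset.erase_insert haT, heq, Finset.erase_insert haT']
        simp [this]
      · intro S hS
        simp only [Finset.mem_filter, Finset.mem_powersetCard] at hS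
        obtain ⟨⟨hSs, hSc⟩, hSA⟩ := hS
        obtain ⟨a, ha⟩ := Finset.card_eq_one.mp hSA
        have haS : a ∈ S := (Finset.mem_inter.mp (ha ▸ Finset.mem_singleton_self a)).1
        have haA : a ∈ A := (Finset.mem_inter.mp (ha ▸ Finset.mem_singleton_self a)).2
        refine ⟨(a, S.erase a), ?_, ?_⟩
        · simp only [Finset.mem_product, Finset.mem_powersetCard]
          refine ⟨haA, ?_, ?_⟩
          · intro j hj
            obtain ⟨hja, hjS⟩ := Finset.mem_erase.mp hj
            refine Finset.mem_sdiff.mpr ⟨hSs hjS, fun hjA => hja ?_⟩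
            have : j ∈ S ∩ A := Finset.mem_inter.mpr ⟨hjS, hjA⟩
            rw [ha] at this
            exact Finset.mem_singleton.mp this
          · rw [Finset.card_erase_of_mem haS, hSc]
        · exact Finset.insert_erase haS
      · rintro ⟨a, T⟩ hp
        simp only [Finset.mem_product, Finset.mem_powersetCard] at hp
        obtain ⟨haA, hTs, hTc⟩ := hp
        have haT : a ∉ T := fun h => (Finset.mem_sdiff.mp (hTs h)).2 haA
        simp only
        rw [Finset.sum_insert haT]
    constructor
    · rw [← hbij, Finset.sum_product]
      have hcard : ((I \ A).powersetCard (k-1)).card = (n - k).choose (k-1) := by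
        rw [Finset.card_powersetCard, hIA]
      have hk1 : k - 1 = (k - 2) + 1 := by omega
      have hTsum : ∑ T ∈ (I \ A).powersetCard (k-1), ∑ i ∈ T, x i
          = ((n - k - 1).choose (k-2) : ℝ) * (- ∑ i ∈ A, x i) := by
        rw [hk1, sum_aux, hIA, hsdiff]
      have hstep : ∀ a ∈ A, ∑ T ∈ (I \ A).powersetCard (k-1), (x a + ∑ i ∈ T, x i)
          = ((n - k).choose (k-1) : ℝ) * x a
            + ((n - k - 1).choose (k-2) : ℝ) * (- ∑ i ∈ A, x i) := by
        intro a _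
        rw [Finset.sum_add_distrib, Finset.sum_const, hcard, hTsum, nsmul_eq_mul]
      rw [Finset.sum_congr rfl hstep, Finset.sum_add_distrib, ← Finset.mul_sum,
        Finset.sum_const, hAc, nsmul_eq_mul]
      obtain ⟨m, hm⟩ : ∃ m, n - k - 1 = m := ⟨_, rfl⟩
      have hnk : n - k = m + 1 := by omega
      have hk1' : k - 1 = (k - 2) + 1 := by omega
      have hpascal : (n-k).choose (k-1) = (n-k-1).choose (k-2) + (n-k-1).choose (k-1) := by
        rw [hm, hnk, hk1', Nat.choose_succ_succ]
      have hcast : ((n-k).choose (k-1) : ℝ)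
          = ((n-k-1).choose (k-2) : ℝ) + ((n-k-1).choose (k-1) : ℝ) := by
        exact_mod_cast congrArg (Nat.cast : ℕ → ℝ) hpascal
      have hkcast : ((k : ℝ)) = ((k : ℕ) : ℝ) := rfl
      rw [hcast]
      ring
    · rw [sub_nonneg]
      have hkc : ((k : ℝ) - 1) = (((k - 1 : ℕ)) : ℝ) := by
        rw [Nat.cast_sub hk, Nat.cast_one]
      rw [hkc, ← Nat.cast_mul, Nat.cast_le]
      exact coeff_aux n k hk2 hn
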